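/- arXiv:2401.08879 — 3 statements merged into one kernel-verified Lean document; each statement's English description precedes it below -/
import Mathlib

section
/- The gradient-based contribution function ctrb^g violates the contribution existence principle (and hence the quantitative contribution existence principle) with respect to each of the DFQuAD, SD-DFQuAD, and EBT semantics: for each of these three semantics there exist an acyclic QBAG G and an argument a ∈ A such that σ_G(a) ≠ τ(a) yet ctrb^g_{G,a}(x) = 0 for all x ∈ A∖{a}. (A witness is the QBAG with A = {a, b, c}, τ(a) = 0.5, τ(b) = τ(c) = 1, and attacks (b,a), (c,a).) -/
open Finset

/-- A quantitative bipolar argumentation graph (QBAG): a finite set of arguments,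
an initial strength function, and attack and support relations. -/
structure QBAG where
  args : Finset ℕ
  tau : ℕ → ℝ
  att : Finset (ℕ × ℕ)
  supp : Finset (ℕ × ℕ)

namespace QBAG

/-- The edge relation of the underlying directed graph (attack or support). -/
def edge (G : QBAG) (x y : ℕ) : Prop := (x, y) ∈ G.att ∨ (x, y) ∈ G.supp

/-- Well-formedness: edges live on the arguments, attack and support are disjoint,
and initial strengths lie in [0,1]. -/
def WF (G : QBAG) : Prop :=
  (∀ p ∈ G.att, p.1 ∈ G.args ∧ p.2 ∈ G.args) ∧
  (∀ p ∈ G.supp, p.1 ∈ G.args ∧ p.2 ∈ G.args) ∧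
  Disjoint G.att G.supp ∧
  (∀ a ∈ G.args, G.tau a ∈ Set.Icc (0 : ℝ) 1)

/-- Acyclicity of the directed graph (A, Att ∪ Supp). -/
def Acyclic (G : QBAG) : Prop := ∀ x, ¬ Relation.TransGen G.edge x x

/-- Direct attackers of an argument. -/
def attackers (G : QBAG) (a : ℕ) : Finset ℕ :=
  (G.att.filter (fun p => p.2 = a)).image Prod.fst

/-- Direct supporters of an argument. -/
def supporters (G : QBAG) (a : ℕ) : Finset ℕ :=
  (G.supp.filter (fun p => p.2 = a)).image Prod.fst

/-- Restriction G↓S of a QBAG to a subset S of the arguments. -/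
def restrict (G : QBAG) (S : Finset ℕ) : QBAG where
  args := G.args ∩ S
  tau := G.tau
  att := G.att.filter (fun p => p.1 ∈ S ∧ p.2 ∈ S)
  supp := G.supp.filter (fun p => p.1 ∈ S ∧ p.2 ∈ S)

/-- G⁻: the QBAG G with every attack and support edge pointing into x removed. -/
def dropInto (G : QBAG) (x : ℕ) : QBAG where
  args := G.args
  tau := G.tau
  att := G.att.filter (fun p => p.2 ≠ x)
  supp := G.supp.filter (fun p => p.2 ≠ x)

/-- G[x←ε]: the QBAG G with the initial strength of x replaced by ε. -/
def setTau (G : QBAG) (x : ℕ) (ε : ℝ) : QBAG where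
  args := G.args
  tau := Function.update G.tau x ε
  att := G.att
  supp := G.supp

end QBAG

noncomputable section

/-- Sum aggregation. -/
def sumAgg (G : QBAG) (s : ℕ → ℝ) (a : ℕ) : ℝ :=
  (∑ y ∈ G.supporters a, s y) - (∑ y ∈ G.attackers a, s y)

/-- Product aggregation. -/
def prodAgg (G : QBAG) (s : ℕ → ℝ) (a : ℕ) : ℝ :=
  (∏ y ∈ G.attackers a, (1 - s y)) - (∏ y ∈ G.supporters a, (1 - s y))

/-- Top aggregation. -/
def topAgg (G : QBAG) (s : ℕ → ℝ) (a : ℕ) : ℝ :=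
  (G.supporters a).fold max 0 s - (G.attackers a).fold max 0 s

/-- h for the 2-Max(1) influence function. -/
def h2 (x : ℝ) : ℝ := max 0 x ^ 2 / (1 + max 0 x ^ 2)

/-- h for the 1-Max(1) influence function. -/
def h1 (x : ℝ) : ℝ := max 0 x / (1 + max 0 x)

/-- 2-Max(1) influence function (used by QE). -/
def iotaQE (w s : ℝ) : ℝ := w - w * h2 (-s) + (1 - w) * h2 s

/-- Linear(1) influence function (used by DFQuAD). -/
def iotaLin (w s : ℝ) : ℝ := w - w * max 0 (-s) + (1 - w) * max 0 s

/-- 1-Max(1) influence function (used by SD-DFQuAD). -/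
def iotaSD (w s : ℝ) : ℝ := w - w * h1 (-s) + (1 - w) * h1 s

/-- Euler-based influence function (used by EB and EBT). -/
def iotaEB (w s : ℝ) : ℝ := 1 - (1 - w ^ 2) / (1 + w * Real.exp s)

/-- σ is a modular semantics with aggregation `agg` and influence `iota`:
on every well-formed acyclic QBAG the final strengths satisfy the defining equations. -/
def IsSemantics (agg : QBAG → (ℕ → ℝ) → ℕ → ℝ) (iota : ℝ → ℝ → ℝ)
    (σ : QBAG → ℕ → ℝ) : Prop :=
  ∀ G : QBAG, G.WF → G.Acyclic → ∀ a ∈ G.args, σ G a = iota (G.tau a) (agg G (σ G) a)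

/-- QE semantics. -/
def IsQE (σ : QBAG → ℕ → ℝ) : Prop := IsSemantics sumAgg iotaQE σ

/-- DFQuAD semantics. -/
def IsDF (σ : QBAG → ℕ → ℝ) : Prop := IsSemantics prodAgg iotaLin σ

/-- SD-DFQuAD semantics. -/
def IsSD (σ : QBAG → ℕ → ℝ) : Prop := IsSemantics prodAgg iotaSD σ

/-- EB semantics. -/
def IsEB (σ : QBAG → ℕ → ℝ) : Prop := IsSemantics sumAgg iotaEB σ

/-- EBT semantics. -/
def IsEBT (σ : QBAG → ℕ → ℝ) : Prop := IsSemantics topAgg iotaEB σ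

/-- A gradual semantics assigns final strengths in [0,1] on acyclic QBAGs. -/
def IsGradualSemantics (σ : QBAG → ℕ → ℝ) : Prop :=
  ∀ G : QBAG, G.WF → G.Acyclic → ∀ a ∈ G.args, σ G a ∈ Set.Icc (0 : ℝ) 1

/-- Removal-based contribution: ctrb^r_{G,a}(x) = σ_G(a) − σ_{G↓(A∖{x})}(a). -/
def ctrbR (σ : QBAG → ℕ → ℝ) (G : QBAG) (a x : ℕ) : ℝ :=
  σ G a - σ (G.restrict (G.args.erase x)) a

/-- Intrinsic-removal contribution: ctrb^{ri}_{G,a}(x) = σ_{G⁻}(a) − σ_{G↓(A∖{x})}(a). -/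
def ctrbRI (σ : QBAG → ℕ → ℝ) (G : QBAG) (a x : ℕ) : ℝ :=
  σ (G.dropInto x) a - σ (G.restrict (G.args.erase x)) a

/-- Shapley-based contribution. -/
def ctrbS (σ : QBAG → ℕ → ℝ) (G : QBAG) (a x : ℕ) : ℝ :=
  ∑ X ∈ ((G.args.erase a).erase x).powerset,
    ((X.card.factorial : ℝ) * ((G.args.erase a).card - X.card - 1).factorial /
      (G.args.erase a).card.factorial) *
    (σ (G.restrict (G.args \ X)) a - σ (G.restrict (G.args \ insert x X)) a)

/-- Gradient-based contribution: the derivative at ε = τ(x) (within [0,1]) of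
the map ε ↦ σ_{G[x←ε]}(a). -/
def ctrbG (σ : QBAG → ℕ → ℝ) (G : QBAG) (a x : ℕ) : ℝ :=
  derivWithin (fun ε => σ (G.setTau x ε) a) (Set.Icc (0 : ℝ) 1) (G.tau x)

/-- The contribution existence principle. -/
def ContributionExistence (ctrb : QBAG → ℕ → ℕ → ℝ) (σ : QBAG → ℕ → ℝ) : Prop :=
  ∀ G : QBAG, G.WF → G.Acyclic → ∀ a ∈ G.args,
    σ G a ≠ G.tau a → ∃ x ∈ G.args, x ≠ a ∧ ctrb G a x ≠ 0

/-- The quantitative contribution existence principle. -/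
def QuantContributionExistence (ctrb : QBAG → ℕ → ℕ → ℝ) (σ : QBAG → ℕ → ℝ) : Prop :=
  ∀ G : QBAG, G.WF → G.Acyclic → ∀ a ∈ G.args,
    ∑ x ∈ G.args.erase a, ctrb G a x = σ G a - G.tau a

/-- The strong faithfulness principle. -/
def StrongFaithfulness (ctrb : QBAG → ℕ → ℕ → ℝ) (σ : QBAG → ℕ → ℝ) : Prop :=
  ∀ G : QBAG, G.WF → G.Acyclic → ∀ a ∈ G.args, ∀ x ∈ G.args,
    ∀ ε ∈ Set.Icc (0 : ℝ) 1,
      (ctrb G a x < 0 →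
        (ε < G.tau x → σ G a < σ (G.setTau x ε) a) ∧
        (ε > G.tau x → σ G a > σ (G.setTau x ε) a)) ∧
      (ctrb G a x = 0 → σ G a = σ (G.setTau x ε) a) ∧
      (ctrb G a x > 0 →
        (ε < G.tau x → σ G a > σ (G.setTau x ε) a) ∧
        (ε > G.tau x → σ G a < σ (G.setTau x ε) a))

/-- The local faithfulness principle. -/
def LocalFaithfulness (ctrb : QBAG → ℕ → ℕ → ℝ) (σ : QBAG → ℕ → ℝ) : Prop :=
  ∀ G : QBAG, G.WF → G.Acyclic → ∀ a ∈ G.args, ∀ x ∈ G.args,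
    ∃ δ > 0, ∀ ε ∈ Set.Icc (G.tau x - δ) (G.tau x + δ) ∩ Set.Icc (0 : ℝ) 1,
      (ctrb G a x < 0 →
        (ε < G.tau x → σ G a < σ (G.setTau x ε) a) ∧
        (ε > G.tau x → σ G a > σ (G.setTau x ε) a)) ∧
      (ctrb G a x > 0 →
        (ε < G.tau x → σ G a > σ (G.setTau x ε) a) ∧
        (ε > G.tau x → σ G a < σ (G.setTau x ε) a))

/-- The quantitative local faithfulness principle: the map ε ↦ σ_{G[x←ε]}(a) is
differentiable (within [0,1]) at τ(x) with derivative ctrb_{G,a}(x); equivalently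
σ_{G[x←τ(x)+ε]}(a) = σ_G(a) + ε·ctrb_{G,a}(x) + e(ε) with e(ε)/ε → 0. -/
def QuantLocalFaithfulness (ctrb : QBAG → ℕ → ℕ → ℝ) (σ : QBAG → ℕ → ℝ) : Prop :=
  ∀ G : QBAG, G.WF → G.Acyclic → ∀ a ∈ G.args, ∀ x ∈ G.args,
    HasDerivWithinAt (fun ε => σ (G.setTau x ε) a) (ctrb G a x)
      (Set.Icc (0 : ℝ) 1) (G.tau x)

/-- The counterfactuality principle. -/
def Counterfactuality (ctrb : QBAG → ℕ → ℕ → ℝ) (σ : QBAG → ℕ → ℝ) : Prop :=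
  ∀ G : QBAG, G.WF → G.Acyclic → ∀ a ∈ G.args, ∀ x ∈ G.args,
    (ctrb G a x < 0 → σ G a < σ (G.restrict (G.args.erase x)) a) ∧
    (ctrb G a x = 0 → σ G a = σ (G.restrict (G.args.erase x)) a) ∧
    (ctrb G a x > 0 → σ G a > σ (G.restrict (G.args.erase x)) a)

/-- The quantitative counterfactuality principle. -/
def QuantCounterfactuality (ctrb : QBAG → ℕ → ℕ → ℝ) (σ : QBAG → ℕ → ℝ) : Prop :=
  ∀ G : QBAG, G.WF → G.Acyclic → ∀ a ∈ G.args, ∀ x ∈ G.args,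
    ctrb G a x = σ G a - σ (G.restrict (G.args.erase x)) a

end


/-! ### Auxiliary material for the witness graph -/

noncomputable def Gw : QBAG := ⟨{0,1,2}, fun n => if n = 0 then 1/2 else 1, {(1,0),(2,0)}, ∅⟩

lemma Gw_WF : Gw.WF := by
  refine ⟨by decide, by decide, by simp [Gw], ?_⟩
  intro a ha
  simp only [Gw] at ha ⊢
  rcases Finset.mem_insert.1 ha with rfl | ha
  · norm_num
  · rcases Finset.mem_insert.1 ha with rfl | ha
    · norm_num
    · rcases Finset.mem_singleton.1 ha with rfl
      norm_num

lemma Gw_edge {u v : ℕ} (h : Gw.edge u v) : v = 0 ∧ u ≠ 0 := by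
  rcases h with h | h
  · simp only [Gw, Finset.mem_insert, Finset.mem_singleton, Prod.ext_iff] at h
    rcases h with ⟨hu, hv⟩ | ⟨hu, hv⟩ <;> subst hu <;> subst hv <;> exact ⟨rfl, by decide⟩
  · simp [Gw] at h

lemma Gw_acyclic : Gw.Acyclic := by
  intro x hx
  have key : ∀ u v : ℕ, Relation.TransGen Gw.edge u v → v = 0 ∧ u ≠ 0 := by
    intro u v h
    induction h with
    | single h => exact Gw_edge h
    | tail _ h ih => exact ⟨(Gw_edge h).1, ih.2⟩
  obtain ⟨h0, hne⟩ := key x x hx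
  exact hne h0

lemma Gw_setTau_acyclic (x : ℕ) (ε : ℝ) : (Gw.setTau x ε).Acyclic := Gw_acyclic

lemma Gw_setTau_WF (x : ℕ) (ε : ℝ) (hε : ε ∈ Set.Icc (0:ℝ) 1) : (Gw.setTau x ε).WF := by
  refine ⟨(by decide : ∀ p ∈ Gw.att, p.1 ∈ Gw.args ∧ p.2 ∈ Gw.args),
    (by decide : ∀ p ∈ Gw.supp, p.1 ∈ Gw.args ∧ p.2 ∈ Gw.args),
    by simp [QBAG.setTau, Gw], ?_⟩
  intro a ha
  by_cases h : a = x
  · subst h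
    simpa [QBAG.setTau] using hε
  · simp only [QBAG.setTau, Function.update_of_ne h, Gw]
    split <;> norm_num

lemma Gw_att0 (x : ℕ) (ε : ℝ) : (Gw.setTau x ε).attackers 0 = {1, 2} :=
  (by decide : Gw.attackers 0 = {1, 2})
lemma Gw_att1 (x : ℕ) (ε : ℝ) : (Gw.setTau x ε).attackers 1 = ∅ :=
  (by decide : Gw.attackers 1 = ∅)
lemma Gw_att2 (x : ℕ) (ε : ℝ) : (Gw.setTau x ε).attackers 2 = ∅ :=
  (by decide : Gw.attackers 2 = ∅)
lemma Gw_supp (x : ℕ) (ε : ℝ) (a : ℕ) : (Gw.setTau x ε).supporters a = ∅ := by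
  simp [QBAG.supporters, QBAG.setTau, Gw]

lemma Gw_mem0 (x : ℕ) (ε : ℝ) : (0:ℕ) ∈ (Gw.setTau x ε).args :=
  (by decide : (0:ℕ) ∈ Gw.args)
lemma Gw_mem1 (x : ℕ) (ε : ℝ) : (1:ℕ) ∈ (Gw.setTau x ε).args :=
  (by decide : (1:ℕ) ∈ Gw.args)
lemma Gw_mem2 (x : ℕ) (ε : ℝ) : (2:ℕ) ∈ (Gw.setTau x ε).args :=
  (by decide : (2:ℕ) ∈ Gw.args)

lemma Gw_setTau_tau0 (x : ℕ) (hx : x = 1 ∨ x = 2) (ε : ℝ) :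
    (Gw.setTau x ε).tau 0 = 1/2 := by
  have hne : (0:ℕ) ≠ x := by rcases hx with rfl | rfl <;> decide
  simp [QBAG.setTau, Function.update_of_ne hne, Gw]

lemma Gw_setTau_tau_self (x : ℕ) (ε : ℝ) : (Gw.setTau x ε).tau x = ε := by
  simp [QBAG.setTau]

lemma prodAgg_12 (x : ℕ) (ε : ℝ) (s : ℕ → ℝ) :
    prodAgg (Gw.setTau x ε) s 0 = (1 - s 1) * (1 - s 2) - 1 := by
  rw [prodAgg, Gw_att0, Gw_supp]
  rw [show ({1,2} : Finset ℕ) = insert 1 {2} from rfl,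
    Finset.prod_insert (by decide), Finset.prod_singleton, Finset.prod_empty]

lemma topAgg_12 (x : ℕ) (ε : ℝ) (s : ℕ → ℝ) :
    topAgg (Gw.setTau x ε) s 0 = - max (s 1) (max (s 2) 0) := by
  rw [topAgg, Gw_att0, Gw_supp]
  rw [show ({1,2} : Finset ℕ) = insert 1 {2} from rfl,
    Finset.fold_insert (by decide), Finset.fold_singleton, Finset.fold_empty]
  ring

/-- Common computation: under each of the three semantics, arguments 1 and 2 (which have
no attackers or supporters) keep their initial strength. -/
lemma DF_base (σ : QBAG → ℕ → ℝ) (h : IsDF σ) (x : ℕ) (ε : ℝ) (hε : ε ∈ Set.Icc (0:ℝ) 1) :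
    σ (Gw.setTau x ε) 1 = (Gw.setTau x ε).tau 1 ∧
    σ (Gw.setTau x ε) 2 = (Gw.setTau x ε).tau 2 := by
  have hWF := Gw_setTau_WF x ε hε
  have hAc := Gw_setTau_acyclic x ε
  constructor
  · rw [h _ hWF hAc 1 (Gw_mem1 x ε)]
    rw [show prodAgg (Gw.setTau x ε) (σ (Gw.setTau x ε)) 1 = 0 by
      rw [prodAgg, Gw_att1, Gw_supp]; simp]
    norm_num [iotaLin]
  · rw [h _ hWF hAc 2 (Gw_mem2 x ε)]
    rw [show prodAgg (Gw.setTau x ε) (σ (Gw.setTau x ε)) 2 = 0 by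
      rw [prodAgg, Gw_att2, Gw_supp]; simp]
    norm_num [iotaLin]

lemma SD_base (σ : QBAG → ℕ → ℝ) (h : IsSD σ) (x : ℕ) (ε : ℝ) (hε : ε ∈ Set.Icc (0:ℝ) 1) :
    σ (Gw.setTau x ε) 1 = (Gw.setTau x ε).tau 1 ∧
    σ (Gw.setTau x ε) 2 = (Gw.setTau x ε).tau 2 := by
  have hWF := Gw_setTau_WF x ε hε
  have hAc := Gw_setTau_acyclic x ε
  constructor
  · rw [h _ hWF hAc 1 (Gw_mem1 x ε)]
    rw [show prodAgg (Gw.setTau x ε) (σ (Gw.setTau x ε)) 1 = 0 by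
      rw [prodAgg, Gw_att1, Gw_supp]; simp]
    norm_num [iotaSD, h1]
  · rw [h _ hWF hAc 2 (Gw_mem2 x ε)]
    rw [show prodAgg (Gw.setTau x ε) (σ (Gw.setTau x ε)) 2 = 0 by
      rw [prodAgg, Gw_att2, Gw_supp]; simp]
    norm_num [iotaSD, h1]

lemma iotaEB_zero (w : ℝ) (hw : 0 ≤ w) : iotaEB w 0 = w := by
  unfold iotaEB
  rw [Real.exp_zero]
  have h1w : (1:ℝ) + w * 1 ≠ 0 := by linarith
  field_simp
  ring

lemma EBT_base (σ : QBAG → ℕ → ℝ) (h : IsEBT σ) (x : ℕ) (ε : ℝ) (hε : ε ∈ Set.Icc (0:ℝ) 1) :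
    σ (Gw.setTau x ε) 1 = (Gw.setTau x ε).tau 1 ∧
    σ (Gw.setTau x ε) 2 = (Gw.setTau x ε).tau 2 := by
  have hWF := Gw_setTau_WF x ε hε
  have hAc := Gw_setTau_acyclic x ε
  have ht1 := (hWF.2.2.2 1 (Gw_mem1 x ε)).1
  have ht2 := (hWF.2.2.2 2 (Gw_mem2 x ε)).1
  constructor
  · rw [h _ hWF hAc 1 (Gw_mem1 x ε)]
    rw [show topAgg (Gw.setTau x ε) (σ (Gw.setTau x ε)) 1 = 0 by
      rw [topAgg, Gw_att1, Gw_supp]; simp]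
    exact iotaEB_zero _ ht1
  · rw [h _ hWF hAc 2 (Gw_mem2 x ε)]
    rw [show topAgg (Gw.setTau x ε) (σ (Gw.setTau x ε)) 2 = 0 by
      rw [topAgg, Gw_att2, Gw_supp]; simp]
    exact iotaEB_zero _ ht2

lemma Gw_other_tau (x : ℕ) (hx : x = 1 ∨ x = 2) (ε : ℝ) :
    (Gw.setTau x ε).tau 1 = 1 ∨ (Gw.setTau x ε).tau 2 = 1 := by
  rcases hx with rfl | rfl
  · right
    simp [QBAG.setTau, Function.update_of_ne (by decide : (2:ℕ) ≠ 1), Gw]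
  · left
    simp [QBAG.setTau, Function.update_of_ne (by decide : (1:ℕ) ≠ 2), Gw]

/-- Constancy of the final strength of argument 0 under changes to τ(1) or τ(2). -/
lemma sigma_const (σ : QBAG → ℕ → ℝ) (hσ : IsDF σ ∨ IsSD σ ∨ IsEBT σ) :
    ∃ c : ℝ, c ≠ 1/2 ∧ ∀ x : ℕ, (x = 1 ∨ x = 2) → ∀ ε ∈ Set.Icc (0:ℝ) 1,
      σ (Gw.setTau x ε) 0 = c := by
  rcases hσ with h | h | h
  · refine ⟨0, by norm_num, ?_⟩
    intro x hx ε hε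
    have hWF := Gw_setTau_WF x ε hε
    have hAc := Gw_setTau_acyclic x ε
    obtain ⟨h1, h2⟩ := DF_base σ h x ε hε
    rw [h _ hWF hAc 0 (Gw_mem0 x ε), Gw_setTau_tau0 x hx ε]
    rw [show prodAgg (Gw.setTau x ε) (σ (Gw.setTau x ε)) 0 = -1 by
      rw [prodAgg_12]
      rcases Gw_other_tau x hx ε with ht | ht
      · rw [h1, ht]; ring
      · rw [h2, ht]; ring]
    norm_num [iotaLin]
  · refine ⟨1/4, by norm_num, ?_⟩
    intro x hx ε hε
    have hWF := Gw_setTau_WF x ε hε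
    have hAc := Gw_setTau_acyclic x ε
    obtain ⟨hb1, hb2⟩ := SD_base σ h x ε hε
    rw [h _ hWF hAc 0 (Gw_mem0 x ε), Gw_setTau_tau0 x hx ε]
    rw [show prodAgg (Gw.setTau x ε) (σ (Gw.setTau x ε)) 0 = -1 by
      rw [prodAgg_12]
      rcases Gw_other_tau x hx ε with ht | ht
      · rw [hb1, ht]; ring
      · rw [hb2, ht]; ring]
    norm_num [iotaSD, _root_.h1]
  · refine ⟨iotaEB (1/2) (-1), ?_, ?_⟩
    · unfold iotaEB
      have hpos : (0:ℝ) < Real.exp (-1) := Real.exp_pos _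
      have hlt : Real.exp (-1) < 1 := Real.exp_lt_one_iff.mpr (by norm_num)
      have hd : (0:ℝ) < 1 + (1/2) * Real.exp (-1) := by linarith
      intro hc
      have hc' : (1 - (1/2:ℝ)^2) / (1 + 1/2 * Real.exp (-1)) = 1/2 := by linarith
      rw [div_eq_iff (ne_of_gt hd)] at hc'
      nlinarith [hc', hlt]
    · intro x hx ε hε
      have hWF := Gw_setTau_WF x ε hε
      have hAc := Gw_setTau_acyclic x ε
      obtain ⟨h1, h2⟩ := EBT_base σ h x ε hε
      have ht1 := (hWF.2.2.2 1 (Gw_mem1 x ε)).2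
      have ht2 := (hWF.2.2.2 2 (Gw_mem2 x ε)).2
      rw [h _ hWF hAc 0 (Gw_mem0 x ε), Gw_setTau_tau0 x hx ε]
      rw [show topAgg (Gw.setTau x ε) (σ (Gw.setTau x ε)) 0 = -1 by
        rw [topAgg_12]
        have e1 : σ (Gw.setTau x ε) 1 ≤ 1 := h1 ▸ ht1
        have e2 : σ (Gw.setTau x ε) 2 ≤ 1 := h2 ▸ ht2
        rcases Gw_other_tau x hx ε with ht | ht
        · rw [h1, ht, max_eq_left (max_le e2 zero_le_one)]
        · rw [h2, ht, max_eq_left zero_le_one, max_eq_right e1]]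

lemma Gw_setTau_self : Gw.setTau 1 1 = Gw := by
  have : Function.update Gw.tau 1 (1:ℝ) = Gw.tau := by
    have h : Gw.tau 1 = 1 := by norm_num [Gw]
    rw [← h]
    exact Function.update_eq_self _ _
  simp [QBAG.setTau, this]

/-- The gradient-based contribution function violates contribution existence
(and hence quantitative contribution existence) w.r.t. each of the DFQuAD, SD-DFQuAD, and
EBT semantics. -/
theorem ctrbG_violates_contribution_existence_DF_SD_EBT :
    ∀ σ : QBAG → ℕ → ℝ, (IsDF σ ∨ IsSD σ ∨ IsEBT σ) →
      ¬ ContributionExistence (ctrbG σ) σ ∧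
      ¬ QuantContributionExistence (ctrbG σ) σ ∧
      ∃ G : QBAG, G.WF ∧ G.Acyclic ∧ ∃ a ∈ G.args,
        σ G a ≠ G.tau a ∧ ∀ x ∈ G.args, x ≠ a → ctrbG σ G a x = 0 := by
  intro σ hσ
  obtain ⟨c, hc_ne, hc⟩ := sigma_const σ hσ
  have hGw : σ Gw 0 = c := by
    rw [← Gw_setTau_self]
    exact hc 1 (Or.inl rfl) 1 (by norm_num)
  have htau0 : Gw.tau 0 = 1/2 := by norm_num [Gw]
  have hne : σ Gw 0 ≠ Gw.tau 0 := by rw [hGw, htau0]; exact hc_ne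
  have hctrb : ∀ x : ℕ, (x = 1 ∨ x = 2) → ctrbG σ Gw 0 x = 0 := by
    intro x hx
    have htau : Gw.tau x = 1 := by rcases hx with rfl | rfl <;> norm_num [Gw]
    unfold ctrbG
    rw [htau]
    have hcongr : derivWithin (fun ε => σ (Gw.setTau x ε) 0) (Set.Icc (0:ℝ) 1) 1
        = derivWithin (fun _ : ℝ => c) (Set.Icc (0:ℝ) 1) 1 := by
      apply derivWithin_congr
      · intro ε hε; exact hc x hx ε hε
      · exact hc x hx 1 (by norm_num)
    rw [hcongr]
    exact congrFun (derivWithin_fun_const _ _) 1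
  have hmem0 : (0:ℕ) ∈ Gw.args := by decide
  have hcases : ∀ x ∈ Gw.args, x ≠ 0 → x = 1 ∨ x = 2 := by decide
  refine ⟨?_, ?_, Gw, Gw_WF, Gw_acyclic, 0, hmem0, hne, ?_⟩
  · intro hCE
    obtain ⟨x, hxargs, hxne, hx0⟩ := hCE Gw Gw_WF Gw_acyclic 0 hmem0 hne
    exact hx0 (hctrb x (hcases x hxargs hxne))
  · intro hQ
    have heq := hQ Gw Gw_WF Gw_acyclic 0 hmem0
    have herase : Gw.args.erase 0 = {1, 2} := by decide
    rw [herase, show ({1,2} : Finset ℕ) = insert 1 {2} from rfl,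
      Finset.sum_insert (by decide), Finset.sum_singleton,
      hctrb 1 (Or.inl rfl), hctrb 2 (Or.inr rfl)] at heq
    rw [htau0, hGw] at heq
    apply hc_ne
    linarith
  · intro x hxargs hxne
    exact hctrb x (hcases x hxargs hxne)
end

section
/- The gradient-based contribution function ctrb^g satisfies the contribution existence principle with respect to the QE semantics and with respect to the EB semantics: for every acyclic QBAG G and topic argument a, if σ_G(a) ≠ τ(a) under QE (respectively EB) semantics, then there exists x ∈ A∖{a} with ctrb^g_{G,a}(x) ≠ 0; in fact some direct attacker or supporter x of a with no other path to a has strictly negative (respectively strictly positive) gradient-based contribution. -/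
open Finset

section AuxStruct

namespace QBAG

lemma setTau_att (G : QBAG) (x : ℕ) (ε : ℝ) : (G.setTau x ε).att = G.att := rfl
lemma setTau_supp (G : QBAG) (x : ℕ) (ε : ℝ) : (G.setTau x ε).supp = G.supp := rfl
lemma setTau_args (G : QBAG) (x : ℕ) (ε : ℝ) : (G.setTau x ε).args = G.args := rfl
lemma setTau_edge (G : QBAG) (x : ℕ) (ε : ℝ) : (G.setTau x ε).edge = G.edge := rfl
lemma setTau_attackers (G : QBAG) (x : ℕ) (ε : ℝ) (b : ℕ) :
    (G.setTau x ε).attackers b = G.attackers b := rfl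
lemma setTau_supporters (G : QBAG) (x : ℕ) (ε : ℝ) (b : ℕ) :
    (G.setTau x ε).supporters b = G.supporters b := rfl

lemma acyclic_setTau {G : QBAG} (h : G.Acyclic) (x : ℕ) (ε : ℝ) : (G.setTau x ε).Acyclic := h

lemma wf_setTau {G : QBAG} (h : G.WF) {ε : ℝ} (hε : ε ∈ Set.Icc (0:ℝ) 1) (x : ℕ) :
    (G.setTau x ε).WF := by
  obtain ⟨h1, h2, h3, h4⟩ := h
  refine ⟨h1, h2, h3, ?_⟩
  intro b hb
  by_cases hbx : b = x
  · subst hbx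
    simpa [QBAG.setTau] using hε
  · simpa [QBAG.setTau, Function.update_of_ne hbx] using h4 b hb

lemma setTau_self (G : QBAG) (x : ℕ) : G.setTau x (G.tau x) = G := by
  cases G with
  | mk args tau att supp => simp [QBAG.setTau]

lemma setTau_tau_ne (G : QBAG) {x b : ℕ} (h : b ≠ x) (ε : ℝ) :
    (G.setTau x ε).tau b = G.tau b := Function.update_of_ne h _ _

lemma setTau_tau_self (G : QBAG) (x : ℕ) (ε : ℝ) :
    (G.setTau x ε).tau x = ε := Function.update_self _ _ _

lemma mem_attackers {G : QBAG} {x a : ℕ} : x ∈ G.attackers a ↔ (x, a) ∈ G.att := by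
  constructor
  · intro h
    simp only [attackers, Finset.mem_image, Finset.mem_filter] at h
    obtain ⟨⟨p1, p2⟩, ⟨hp, hp2⟩, hp1⟩ := h
    subst hp1; subst hp2; exact hp
  · intro h
    simp only [attackers, Finset.mem_image, Finset.mem_filter]
    exact ⟨(x, a), ⟨h, rfl⟩, rfl⟩

lemma mem_supporters {G : QBAG} {x a : ℕ} : x ∈ G.supporters a ↔ (x, a) ∈ G.supp := by
  constructor
  · intro h
    simp only [supporters, Finset.mem_image, Finset.mem_filter] at h
    obtain ⟨⟨p1, p2⟩, ⟨hp, hp2⟩, hp1⟩ := h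
    subst hp1; subst hp2; exact hp
  · intro h
    simp only [supporters, Finset.mem_image, Finset.mem_filter]
    exact ⟨(x, a), ⟨h, rfl⟩, rfl⟩

lemma mem_args_of_edge {G : QBAG} (hWF : G.WF) {y b : ℕ} (h : G.edge y b) :
    y ∈ G.args ∧ b ∈ G.args := by
  rcases h with h | h
  · exact hWF.1 _ h
  · exact hWF.2.1 _ h

/-- Ancestors of `b`. -/
noncomputable def anc (G : QBAG) (b : ℕ) : Finset ℕ :=
  @Finset.filter _ (fun z => Relation.TransGen G.edge z b) (Classical.decPred _) G.args

lemma mem_anc {G : QBAG} {z b : ℕ} :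
    z ∈ G.anc b ↔ z ∈ G.args ∧ Relation.TransGen G.edge z b := by
  classical
  simp [anc]

lemma anc_card_lt {G : QBAG} (hWF : G.WF) (hAc : G.Acyclic) {y b : ℕ} (h : G.edge y b) :
    (G.anc y).card < (G.anc b).card := by
  apply Finset.card_lt_card
  constructor
  · intro z hz
    rw [mem_anc] at hz ⊢
    exact ⟨hz.1, hz.2.tail h⟩
  · intro hsub
    have hy : y ∈ G.anc b := mem_anc.mpr ⟨(mem_args_of_edge hWF h).1, Relation.TransGen.single h⟩
    have := hsub hy
    rw [mem_anc] at this
    exact hAc y this.2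

end QBAG

open QBAG

lemma sumAgg_setTau (G : QBAG) (x : ℕ) (ε : ℝ) (f : ℕ → ℝ) (b : ℕ) :
    sumAgg (G.setTau x ε) f b = sumAgg G f b := rfl

/-- Locality: changing τ at `x` does not affect nodes not reachable from `x`. -/
lemma sigma_setTau_eq (ι : ℝ → ℝ → ℝ) (σ : QBAG → ℕ → ℝ) (hσ : IsSemantics sumAgg ι σ)
    (G : QBAG) (hWF : G.WF) (hAc : G.Acyclic) (x : ℕ) (ε : ℝ) (hε : ε ∈ Set.Icc (0:ℝ) 1) :
    ∀ n, ∀ b ∈ G.args, (G.anc b).card ≤ n → ¬ Relation.ReflTransGen G.edge x b →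
      σ (G.setTau x ε) b = σ G b := by
  intro n
  induction n using Nat.strong_induction_on with
  | _ n IH =>
    intro b hb hcard hxb
    have hbx : b ≠ x := fun h => hxb (h ▸ Relation.ReflTransGen.refl)
    have e1 := hσ (G.setTau x ε) (wf_setTau hWF hε x) (acyclic_setTau hAc x ε) b hb
    have e2 := hσ G hWF hAc b hb
    rw [e1, e2, G.setTau_tau_ne hbx, sumAgg_setTau]
    congr 1
    have hpar : ∀ y, G.edge y b → σ (G.setTau x ε) y = σ G y := by
      intro y hy
      have hya : y ∈ G.args := (mem_args_of_edge hWF hy).1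
      have hlt : (G.anc y).card < n := lt_of_lt_of_le (anc_card_lt hWF hAc hy) hcard
      exact IH _ hlt y hya le_rfl (fun h => hxb (h.tail hy))
    simp only [sumAgg]
    congr 1
    · exact Finset.sum_congr rfl fun y hy => hpar y (Or.inr (mem_supporters.mp hy))
    · exact Finset.sum_congr rfl fun y hy => hpar y (Or.inl (mem_attackers.mp hy))

end AuxStruct


section AuxFormula

open QBAG

/-- The explicit formula for σ_{G[x←ε]}(a) when x is a parent of a with no other path to a. -/
lemma sigma_setTau_formula (ι : ℝ → ℝ → ℝ) (σ : QBAG → ℕ → ℝ) (hσ : IsSemantics sumAgg ι σ)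
    (G : QBAG) (hWF : G.WF) (hAc : G.Acyclic) (a x : ℕ)
    (hxa : G.edge x a) (hmax : ∀ y, G.edge x y → Relation.ReflTransGen G.edge y a → y = a)
    (ε : ℝ) (hε : ε ∈ Set.Icc (0:ℝ) 1) :
    σ (G.setTau x ε) a = ι (G.tau a)
      ((∑ y ∈ G.supporters a, (if y = x then ι ε (sumAgg G (σ G) x) else σ G y))
      - (∑ y ∈ G.attackers a, (if y = x then ι ε (sumAgg G (σ G) x) else σ G y))) := by
  have hxargs : x ∈ G.args := (mem_args_of_edge hWF hxa).1
  have haargs : a ∈ G.args := (mem_args_of_edge hWF hxa).2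
  have hax : a ≠ x := by
    intro h; exact hAc a (Relation.TransGen.single (h ▸ hxa))
  have e1 := hσ (G.setTau x ε) (wf_setTau hWF hε x) (acyclic_setTau hAc x ε) a haargs
  rw [e1, G.setTau_tau_ne hax, sumAgg_setTau]
  congr 1
  -- value at each parent of a
  have hval : ∀ y, G.edge y a →
      σ (G.setTau x ε) y = (if y = x then ι ε (sumAgg G (σ G) x) else σ G y) := by
    intro y hy
    by_cases hyx : y = x
    · subst hyx
      rw [if_pos rfl]
      have e2 := hσ (G.setTau y ε) (wf_setTau hWF hε y) (acyclic_setTau hAc y ε) y hxargs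
      rw [e2, G.setTau_tau_self, sumAgg_setTau]
      congr 1
      have hparx : ∀ p, G.edge p y → σ (G.setTau y ε) p = σ G p := by
        intro p hp
        have hpargs : p ∈ G.args := (mem_args_of_edge hWF hp).1
        refine sigma_setTau_eq ι σ hσ G hWF hAc y ε hε (G.anc p).card p hpargs le_rfl ?_
        intro hreach
        exact hAc y (Relation.TransGen.tail' hreach hp)
      simp only [sumAgg]
      congr 1
      · exact Finset.sum_congr rfl fun p hp => hparx p (Or.inr (mem_supporters.mp hp))
      · exact Finset.sum_congr rfl fun p hp => hparx p (Or.inl (mem_attackers.mp hp))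
    · rw [if_neg hyx]
      have hyargs : y ∈ G.args := (mem_args_of_edge hWF hy).1
      refine sigma_setTau_eq ι σ hσ G hWF hAc x ε hε (G.anc y).card y hyargs le_rfl ?_
      intro hreach
      rcases (Relation.reflTransGen_iff_eq_or_transGen.mp hreach) with h | h
      · exact hyx h
      · rcases (Relation.TransGen.head'_iff.mp h) with ⟨z, hxz, hzy⟩
        have hza : z = a := hmax z hxz (hzy.trans (Relation.ReflTransGen.single hy))
        rw [hza] at hzy
        exact hAc a (Relation.TransGen.tail' hzy hy)
  simp only [sumAgg]
  congr 1
  · exact Finset.sum_congr rfl fun y hy => hval y (Or.inr (mem_supporters.mp hy))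
  · exact Finset.sum_congr rfl fun y hy => hval y (Or.inl (mem_attackers.mp hy))

/-- Existence of a maximal direct parent with a clean formula. -/
lemma structural_existence (ι : ℝ → ℝ → ℝ) (σ : QBAG → ℕ → ℝ) (hσ : IsSemantics sumAgg ι σ)
    (G : QBAG) (hWF : G.WF) (hAc : G.Acyclic) (a : ℕ) (ha : a ∈ G.args)
    (Hι0 : ι (G.tau a) 0 = G.tau a) (hne : σ G a ≠ G.tau a) :
    ∃ x ∈ G.args, x ≠ a ∧ ((x, a) ∈ G.att ∨ (x, a) ∈ G.supp) ∧
      (∀ y, G.edge x y → Relation.ReflTransGen G.edge y a → y = a) ∧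
      ∃ B sg : ℝ,
        ((sg = -1 ∧ (x, a) ∈ G.att ∧ (x, a) ∉ G.supp) ∨
         (sg = 1 ∧ (x, a) ∈ G.supp ∧ (x, a) ∉ G.att)) ∧
        ∀ ε ∈ Set.Icc (0:ℝ) 1,
          σ (G.setTau x ε) a = ι (G.tau a) (B + sg * ι ε (sumAgg G (σ G) x)) := by
  classical
  -- parents are nonempty
  have hpar : (G.attackers a ∪ G.supporters a).Nonempty := by
    by_contra hemp
    rw [Finset.not_nonempty_iff_eq_empty, Finset.union_eq_empty] at hemp
    have : σ G a = G.tau a := by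
      rw [hσ G hWF hAc a ha]
      simp only [sumAgg, hemp.1, hemp.2, Finset.sum_empty, sub_zero]
      simpa using Hι0
    exact hne this
  -- pick a parent maximizing the number of ancestors
  obtain ⟨x, hxmem, hxmax⟩ := Finset.exists_max_image _ (fun z => (G.anc z).card) hpar
  have hedgexa : G.edge x a := by
    rcases Finset.mem_union.mp hxmem with h | h
    · exact Or.inl (QBAG.mem_attackers.mp h)
    · exact Or.inr (QBAG.mem_supporters.mp h)
  have hxargs : x ∈ G.args := (QBAG.mem_args_of_edge hWF hedgexa).1
  have hxa : x ≠ a := by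
    intro h; exact hAc x (Relation.TransGen.single (by rw [h] at hedgexa ⊢; exact hedgexa))
  have hmax : ∀ y, G.edge x y → Relation.ReflTransGen G.edge y a → y = a := by
    intro y hxy hya
    by_contra hyne
    rcases Relation.ReflTransGen.cases_tail hya with h | ⟨z, hyz, hza⟩
    · exact hyne h.symm
    · have hzmem : z ∈ G.attackers a ∪ G.supporters a := by
        rcases hza with h | h
        · exact Finset.mem_union_left _ (QBAG.mem_attackers.mpr h)
        · exact Finset.mem_union_right _ (QBAG.mem_supporters.mpr h)
      have hxz : Relation.TransGen G.edge x z := Relation.TransGen.head' hxy hyz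
      have hlt : (G.anc x).card < (G.anc z).card := by
        apply Finset.card_lt_card
        constructor
        · intro w hw
          rw [QBAG.mem_anc] at hw ⊢
          exact ⟨hw.1, hw.2.trans hxz⟩
        · intro hsub
          have hxin : x ∈ G.anc z := QBAG.mem_anc.mpr ⟨hxargs, hxz⟩
          have := hsub hxin
          rw [QBAG.mem_anc] at this
          exact hAc x this.2
      exact absurd (hxmax z hzmem) (not_le.mpr hlt)
  refine ⟨x, hxargs, hxa, hedgexa, hmax, ?_⟩
  have hform := sigma_setTau_formula ι σ hσ G hWF hAc a x hedgexa hmax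
  set c := sumAgg G (σ G) x with hc
  rcases hedgexa with hatt | hsupp
  · have hnsupp : (x, a) ∉ G.supp := fun h =>
      (Finset.disjoint_left.mp hWF.2.2.1) hatt h
    refine ⟨(∑ y ∈ G.supporters a, σ G y) - (∑ y ∈ (G.attackers a).erase x, σ G y), -1,
      Or.inl ⟨rfl, hatt, hnsupp⟩, ?_⟩
    intro ε hε
    rw [hform ε hε]
    congr 1
    have hxatt : x ∈ G.attackers a := QBAG.mem_attackers.mpr hatt
    have hs : (∑ y ∈ G.supporters a, (if y = x then ι ε c else σ G y))
        = ∑ y ∈ G.supporters a, σ G y := by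
      apply Finset.sum_congr rfl
      intro y hy
      have : y ≠ x := fun h => hnsupp (h ▸ QBAG.mem_supporters.mp hy)
      rw [if_neg this]
    have hasum : (∑ y ∈ G.attackers a, (if y = x then ι ε c else σ G y))
        = ι ε c + ∑ y ∈ (G.attackers a).erase x, σ G y := by
      rw [← Finset.add_sum_erase _ _ hxatt, if_pos rfl]
      congr 1
      apply Finset.sum_congr rfl
      intro y hy
      rw [if_neg (Finset.ne_of_mem_erase hy)]
    rw [hs, hasum]; ring
  · have hnatt : (x, a) ∉ G.att := fun h =>
      (Finset.disjoint_left.mp hWF.2.2.1) h hsupp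
    refine ⟨(∑ y ∈ (G.supporters a).erase x, σ G y) - (∑ y ∈ G.attackers a, σ G y), 1,
      Or.inr ⟨rfl, hsupp, hnatt⟩, ?_⟩
    intro ε hε
    rw [hform ε hε]
    congr 1
    have hxsupp : x ∈ G.supporters a := QBAG.mem_supporters.mpr hsupp
    have hasum : (∑ y ∈ G.attackers a, (if y = x then ι ε c else σ G y))
        = ∑ y ∈ G.attackers a, σ G y := by
      apply Finset.sum_congr rfl
      intro y hy
      have : y ≠ x := fun h => hnatt (h ▸ QBAG.mem_attackers.mp hy)
      rw [if_neg this]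
    have hs : (∑ y ∈ G.supporters a, (if y = x then ι ε c else σ G y))
        = ι ε c + ∑ y ∈ (G.supporters a).erase x, σ G y := by
      rw [← Finset.add_sum_erase _ _ hxsupp, if_pos rfl]
      congr 1
      apply Finset.sum_congr rfl
      intro y hy
      rw [if_neg (Finset.ne_of_mem_erase hy)]
    rw [hasum, hs]; ring
  
end AuxFormula


section AuxAnalytic

lemma h2_of_nonpos {x : ℝ} (h : x ≤ 0) : h2 x = 0 := by
  rw [h2, max_eq_left h]
  norm_num

lemma h2_of_nonneg {x : ℝ} (h : 0 ≤ x) : h2 x = x ^ 2 / (1 + x ^ 2) := by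
  rw [h2, max_eq_right h]

lemma h2_lt_one (x : ℝ) : h2 x < 1 := by
  rw [h2, div_lt_one (by positivity)]
  nlinarith [sq_nonneg (max 0 x)]

lemma kpos (c : ℝ) : 0 < 1 - h2 (-c) - h2 c := by
  rcases le_total c 0 with h | h
  · rw [h2_of_nonpos h]
    have := h2_lt_one (-c); linarith
  · rw [h2_of_nonpos (neg_nonpos.mpr h)]
    have := h2_lt_one c; linarith

lemma iotaQE_zero_right (w : ℝ) : iotaQE w 0 = w := by
  simp [iotaQE, h2_of_nonpos (le_refl (0:ℝ))]

lemma iotaQE_linear (ε c : ℝ) : iotaQE ε c = (1 - h2 (-c) - h2 c) * ε + h2 c := by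
  rw [iotaQE]; ring

lemma iotaQE_of_nonpos {w s : ℝ} (h : s ≤ 0) :
    iotaQE w s = w + (-w) * (s ^ 2 / (1 + s ^ 2)) := by
  rw [iotaQE, h2_of_nonpos h, h2_of_nonneg (neg_nonneg.mpr h)]
  simp only [neg_sq]
  ring

lemma iotaQE_of_nonneg {w s : ℝ} (h : 0 ≤ s) :
    iotaQE w s = w + (1 - w) * (s ^ 2 / (1 + s ^ 2)) := by
  rw [iotaQE, h2_of_nonpos (neg_nonpos.mpr h), h2_of_nonneg h]
  ring

lemma analyticQE (w c B sg t : ℝ) (hw : w ∈ Set.Icc (0:ℝ) 1) (ht : t ∈ Set.Icc (0:ℝ) 1)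
    (hsg : sg = -1 ∨ sg = 1)
    (hne : iotaQE w (B + sg * iotaQE t c) ≠ w)
    (f : ℝ → ℝ) (hf : ∀ ε ∈ Set.Icc (0:ℝ) 1, f ε = iotaQE w (B + sg * iotaQE ε c)) :
    ∃ d : ℝ, HasDerivWithinAt f d (Set.Icc (0:ℝ) 1) t ∧ 0 < sg * d := by
  set k := 1 - h2 (-c) - h2 c with hk
  have hkpos : 0 < k := kpos c
  set A := B + sg * h2 c with hA
  have hrw : ∀ ε : ℝ, B + sg * iotaQE ε c = A + sg * k * ε := by
    intro ε; rw [iotaQE_linear, hA, hk]; ring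
  set s0 := A + sg * k * t with hs0
  have hs0t : B + sg * iotaQE t c = s0 := hrw t
  have hs0ne : s0 ≠ 0 := by
    intro h
    apply hne
    rw [hs0t, h, iotaQE_zero_right]
  have hsg2 : sg * sg = 1 := by rcases hsg with h | h <;> rw [h] <;> norm_num
  have hlin : HasDerivAt (fun ε : ℝ => A + sg * k * ε) (sg * k) t := by
    simpa using ((hasDerivAt_id t).const_mul (sg * k)).const_add A
  have hq : HasDerivAt (fun u : ℝ => u ^ 2 / (1 + u ^ 2))
      ((2 * s0 * (1 + s0 ^ 2) - s0 ^ 2 * (2 * s0)) / (1 + s0 ^ 2) ^ 2) s0 := by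
    have h1 : HasDerivAt (fun u : ℝ => u ^ 2) (2 * s0) s0 := by
      simpa using hasDerivAt_pow 2 s0
    have h2' : HasDerivAt (fun u : ℝ => 1 + u ^ 2) (2 * s0) s0 := h1.const_add 1
    exact h1.div h2' (by positivity)
  set Q := (2 * s0 * (1 + s0 ^ 2) - s0 ^ 2 * (2 * s0)) / (1 + s0 ^ 2) ^ 2 with hQ
  have hcomp : HasDerivAt (fun ε : ℝ => (A + sg * k * ε) ^ 2 / (1 + (A + sg * k * ε) ^ 2))
      (Q * (sg * k)) t := by
    have := HasDerivAt.comp t (hs0 ▸ hq) hlin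
    simpa [Function.comp_def] using this
  rcases lt_or_gt_of_ne hs0ne with hneg | hpos
  · -- s0 < 0
    have hw0 : w ≠ 0 := by
      intro h
      apply hne
      rw [hs0t, h, iotaQE_of_nonpos hneg.le]
      ring
    have hwpos : 0 < w := lt_of_le_of_ne hw.1 (Ne.symm hw0)
    have hQneg : Q < 0 := by
      rw [hQ]
      apply div_neg_of_neg_of_pos
      · nlinarith
      · positivity
    have hgd : HasDerivAt
        (fun ε : ℝ => w + (-w) * ((A + sg * k * ε) ^ 2 / (1 + (A + sg * k * ε) ^ 2)))
        ((-w) * (Q * (sg * k))) t := by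
      simpa using (hcomp.const_mul (-w)).const_add w
    have hloc : ∀ᶠ ε in nhds t, A + sg * k * ε < 0 := by
      have hcont : Continuous fun ε : ℝ => A + sg * k * ε := by continuity
      have : IsOpen {ε : ℝ | A + sg * k * ε < 0} := isOpen_lt hcont continuous_const
      exact this.mem_nhds (by simpa [← hs0] using hneg)
    have hgeq : ∀ ε : ℝ, ε ∈ Set.Icc (0:ℝ) 1 → A + sg * k * ε ≤ 0 →
        f ε = w + (-w) * ((A + sg * k * ε) ^ 2 / (1 + (A + sg * k * ε) ^ 2)) := by
      intro ε hεI hεn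
      rw [hf ε hεI, hrw ε, iotaQE_of_nonpos hεn]
    refine ⟨(-w) * (Q * (sg * k)), ?_, ?_⟩
    · apply hgd.hasDerivWithinAt.congr_of_eventuallyEq
      · filter_upwards [self_mem_nhdsWithin, hloc.filter_mono nhdsWithin_le_nhds] with ε hεI hεn
        exact hgeq ε hεI hεn.le
      · exact hgeq t ht (by rw [← hs0]; exact hneg.le)
    · have h' : sg * (-w * (Q * (sg * k))) = sg * sg * (w * -Q * k) := by ring
      rw [h', hsg2, one_mul]
      exact mul_pos (mul_pos hwpos (neg_pos.mpr hQneg)) hkpos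
  · -- s0 > 0
    have hw1 : w ≠ 1 := by
      intro h
      apply hne
      rw [hs0t, h, iotaQE_of_nonneg hpos.le]
      ring
    have hwlt : w < 1 := lt_of_le_of_ne hw.2 hw1
    have hQpos : 0 < Q := by
      rw [hQ]
      apply div_pos
      · nlinarith
      · positivity
    have hgd : HasDerivAt
        (fun ε : ℝ => w + (1 - w) * ((A + sg * k * ε) ^ 2 / (1 + (A + sg * k * ε) ^ 2)))
        ((1 - w) * (Q * (sg * k))) t := by
      simpa using (hcomp.const_mul (1 - w)).const_add w
    have hloc : ∀ᶠ ε in nhds t, 0 < A + sg * k * ε := by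
      have hcont : Continuous fun ε : ℝ => A + sg * k * ε := by continuity
      have : IsOpen {ε : ℝ | 0 < A + sg * k * ε} := isOpen_lt continuous_const hcont
      exact this.mem_nhds (by simpa [← hs0] using hpos)
    have hgeq : ∀ ε : ℝ, ε ∈ Set.Icc (0:ℝ) 1 → 0 ≤ A + sg * k * ε →
        f ε = w + (1 - w) * ((A + sg * k * ε) ^ 2 / (1 + (A + sg * k * ε) ^ 2)) := by
      intro ε hεI hεn
      rw [hf ε hεI, hrw ε, iotaQE_of_nonneg hεn]
    refine ⟨(1 - w) * (Q * (sg * k)), ?_, ?_⟩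
    · apply hgd.hasDerivWithinAt.congr_of_eventuallyEq
      · filter_upwards [self_mem_nhdsWithin, hloc.filter_mono nhdsWithin_le_nhds] with ε hεI hεn
        exact hgeq ε hεI hεn.le
      · exact hgeq t ht (by rw [← hs0]; exact hpos.le)
    · have h' : sg * ((1 - w) * (Q * (sg * k))) = sg * sg * ((1 - w) * Q * k) := by ring
      rw [h', hsg2, one_mul]
      exact mul_pos (mul_pos (by linarith) hQpos) hkpos

lemma analyticEB (w c B sg t : ℝ) (hw : w ∈ Set.Icc (0:ℝ) 1) (ht : t ∈ Set.Icc (0:ℝ) 1)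
    (hsg : sg = -1 ∨ sg = 1)
    (hne : iotaEB w (B + sg * iotaEB t c) ≠ w)
    (f : ℝ → ℝ) (hf : ∀ ε ∈ Set.Icc (0:ℝ) 1, f ε = iotaEB w (B + sg * iotaEB ε c)) :
    ∃ d : ℝ, HasDerivWithinAt f d (Set.Icc (0:ℝ) 1) t ∧ 0 < sg * d := by
  have he : 0 < Real.exp c := Real.exp_pos c
  have hsg2 : sg * sg = 1 := by rcases hsg with h | h <;> rw [h] <;> norm_num
  have hw0 : w ≠ 0 := by
    intro h
    apply hne
    rw [h]
    norm_num [iotaEB]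
  have hw1 : w ≠ 1 := by
    intro h
    apply hne
    rw [h]
    norm_num [iotaEB]
  have hwpos : 0 < w := lt_of_le_of_ne hw.1 (Ne.symm hw0)
  have hwlt : w < 1 := lt_of_le_of_ne hw.2 hw1
  -- inner derivative
  have hden : (0:ℝ) < 1 + t * Real.exp c := by nlinarith [ht.1]
  set Din := -((-(2 * t) * (1 + t * Real.exp c) - (1 - t ^ 2) * Real.exp c) /
      (1 + t * Real.exp c) ^ 2) with hDin
  have hinner : HasDerivAt (fun ε : ℝ => iotaEB ε c) Din t := by
    have hN : HasDerivAt (fun ε : ℝ => 1 - ε ^ 2) (-(2 * t)) t := by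
      simpa using (hasDerivAt_pow 2 t).const_sub 1
    have hD : HasDerivAt (fun ε : ℝ => 1 + ε * Real.exp c) (Real.exp c) t := by
      simpa using ((hasDerivAt_id t).mul_const (Real.exp c)).const_add 1
    have h1 := (hN.div hD hden.ne').const_sub 1
    have heq : (fun ε : ℝ => 1 - (1 - ε ^ 2) / (1 + ε * Real.exp c))
        = fun ε : ℝ => iotaEB ε c := by
      funext ε; rw [iotaEB]
    rw [hDin, ← heq]
    exact h1
  have hDinpos : 0 < Din := by
    rw [hDin]
    have hnum : -(2 * t) * (1 + t * Real.exp c) - (1 - t ^ 2) * Real.exp c < 0 := by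
      nlinarith [ht.1, ht.2]
    have := div_neg_of_neg_of_pos hnum (by positivity :
      (0:ℝ) < (1 + t * Real.exp c) ^ 2)
    linarith
  -- outer derivative
  set s0 := B + sg * iotaEB t c with hs0
  have hdenout : (0:ℝ) < 1 + w * Real.exp s0 := by nlinarith [Real.exp_pos s0]
  set Dout := -((0 * (1 + w * Real.exp s0) - (1 - w ^ 2) * (w * Real.exp s0)) /
      (1 + w * Real.exp s0) ^ 2) with hDout
  have houter : HasDerivAt (fun u : ℝ => iotaEB w u) Dout s0 := by
    have hD : HasDerivAt (fun u : ℝ => 1 + w * Real.exp u) (w * Real.exp s0) s0 := by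
      simpa using ((Real.hasDerivAt_exp s0).const_mul w).const_add 1
    have hN : HasDerivAt (fun _ : ℝ => 1 - w ^ 2) 0 s0 := hasDerivAt_const _ _
    have h1 := (hN.div hD hdenout.ne').const_sub 1
    have heq : (fun u : ℝ => 1 - (1 - w ^ 2) / (1 + w * Real.exp u))
        = fun u : ℝ => iotaEB w u := by
      funext u; rw [iotaEB]
    rw [hDout, ← heq]
    exact h1
  have hDoutpos : 0 < Dout := by
    rw [hDout]
    have hnum : 0 * (1 + w * Real.exp s0) - (1 - w ^ 2) * (w * Real.exp s0) < 0 := by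
      have hfac : 0 < 1 - w ^ 2 := by nlinarith
      have := mul_pos hfac (mul_pos hwpos (Real.exp_pos s0))
      linarith
    have := div_neg_of_neg_of_pos hnum (by positivity :
      (0:ℝ) < (1 + w * Real.exp s0) ^ 2)
    linarith
  have haff : HasDerivAt (fun ε : ℝ => B + sg * iotaEB ε c) (sg * Din) t :=
    (hinner.const_mul sg).const_add B
  have hgd : HasDerivAt (fun ε : ℝ => iotaEB w (B + sg * iotaEB ε c))
      (Dout * (sg * Din)) t := by
    have := HasDerivAt.comp t (hs0 ▸ houter) haff
    simpa [Function.comp_def] using this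
  refine ⟨Dout * (sg * Din), ?_, ?_⟩
  · exact hgd.hasDerivWithinAt.congr hf (hf t ht)
  · have h' : sg * (Dout * (sg * Din)) = sg * sg * (Dout * Din) := by ring
    rw [h', hsg2, one_mul]
    exact mul_pos hDoutpos hDinpos

end AuxAnalytic

/-- The gradient-based contribution function satisfies contribution
existence w.r.t. the QE and EB semantics; in fact some direct attacker or supporter x of
the topic argument a with no other path to a has strictly negative (for attackers)
respectively strictly positive (for supporters) gradient-based contribution. -/
theorem ctrbG_satisfies_contribution_existence_QE_EB
    (σ : QBAG → ℕ → ℝ) (hσ : IsQE σ ∨ IsEB σ) :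
    ∀ G : QBAG, G.WF → G.Acyclic → ∀ a ∈ G.args, σ G a ≠ G.tau a →
      (∃ x ∈ G.args, x ≠ a ∧ ctrbG σ G a x ≠ 0) ∧
      ∃ x ∈ G.args, x ≠ a ∧ ((x, a) ∈ G.att ∨ (x, a) ∈ G.supp) ∧
        (∀ y, G.edge x y → Relation.ReflTransGen G.edge y a → y = a) ∧
        ((x, a) ∈ G.att → ctrbG σ G a x < 0) ∧
        ((x, a) ∈ G.supp → ctrbG σ G a x > 0) := by
  intro G hWF hAc a ha hne
  have hta : G.tau a ∈ Set.Icc (0:ℝ) 1 := hWF.2.2.2 a ha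
  have main : ∃ x ∈ G.args, x ≠ a ∧ ((x, a) ∈ G.att ∨ (x, a) ∈ G.supp) ∧
      (∀ y, G.edge x y → Relation.ReflTransGen G.edge y a → y = a) ∧
      ((x, a) ∈ G.att → ctrbG σ G a x < 0) ∧
      ((x, a) ∈ G.supp → ctrbG σ G a x > 0) := by
    rcases hσ with hσ | hσ
    · -- QE semantics
      have Hι0 : iotaQE (G.tau a) 0 = G.tau a := iotaQE_zero_right _
      obtain ⟨x, hxargs, hxa, hedge, hmax, B, sg, hsgc, hform⟩ :=
        structural_existence iotaQE σ hσ G hWF hAc a ha Hι0 hne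
      have htx : G.tau x ∈ Set.Icc (0:ℝ) 1 := hWF.2.2.2 x hxargs
      have hsg : sg = -1 ∨ sg = 1 := by
        rcases hsgc with ⟨h, _, _⟩ | ⟨h, _, _⟩
        exacts [Or.inl h, Or.inr h]
      have hfval : σ G a
          = iotaQE (G.tau a) (B + sg * iotaQE (G.tau x) (sumAgg G (σ G) x)) := by
        have h := hform (G.tau x) htx
        rw [G.setTau_self x] at h
        exact h
      have hne' : iotaQE (G.tau a) (B + sg * iotaQE (G.tau x) (sumAgg G (σ G) x))
          ≠ G.tau a := fun h => hne (hfval.trans h)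
      obtain ⟨d, hder, hsd⟩ := analyticQE (G.tau a) (sumAgg G (σ G) x) B sg (G.tau x)
        hta htx hsg hne' (fun ε => σ (G.setTau x ε) a) hform
      have hctrb : ctrbG σ G a x = d := by
        simp only [ctrbG]
        exact hder.derivWithin ((uniqueDiffOn_Icc (by norm_num : (0:ℝ) < 1)) _ htx)
      rcases hsgc with ⟨hsgm, hatt, hnsupp⟩ | ⟨hsgp, hsupp, hnatt⟩
      · rw [hsgm] at hsd
        have hd : d < 0 := by linarith
        exact ⟨x, hxargs, hxa, hedge, hmax, fun _ => hctrb ▸ hd,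
          fun h => absurd h hnsupp⟩
      · rw [hsgp] at hsd
        have hd : 0 < d := by linarith
        exact ⟨x, hxargs, hxa, hedge, hmax, fun h => absurd h hnatt,
          fun _ => hctrb ▸ hd⟩
    · -- EB semantics
      have Hι0 : iotaEB (G.tau a) 0 = G.tau a := by
        have h1 : (0:ℝ) < 1 + G.tau a := by have := hta.1; linarith
        rw [iotaEB, Real.exp_zero, mul_one]
        field_simp
        ring
      obtain ⟨x, hxargs, hxa, hedge, hmax, B, sg, hsgc, hform⟩ :=
        structural_existence iotaEB σ hσ G hWF hAc a ha Hι0 hne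
      have htx : G.tau x ∈ Set.Icc (0:ℝ) 1 := hWF.2.2.2 x hxargs
      have hsg : sg = -1 ∨ sg = 1 := by
        rcases hsgc with ⟨h, _, _⟩ | ⟨h, _, _⟩
        exacts [Or.inl h, Or.inr h]
      have hfval : σ G a
          = iotaEB (G.tau a) (B + sg * iotaEB (G.tau x) (sumAgg G (σ G) x)) := by
        have h := hform (G.tau x) htx
        rw [G.setTau_self x] at h
        exact h
      have hne' : iotaEB (G.tau a) (B + sg * iotaEB (G.tau x) (sumAgg G (σ G) x))
          ≠ G.tau a := fun h => hne (hfval.trans h)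
      obtain ⟨d, hder, hsd⟩ := analyticEB (G.tau a) (sumAgg G (σ G) x) B sg (G.tau x)
        hta htx hsg hne' (fun ε => σ (G.setTau x ε) a) hform
      have hctrb : ctrbG σ G a x = d := by
        simp only [ctrbG]
        exact hder.derivWithin ((uniqueDiffOn_Icc (by norm_num : (0:ℝ) < 1)) _ htx)
      rcases hsgc with ⟨hsgm, hatt, hnsupp⟩ | ⟨hsgp, hsupp, hnatt⟩
      · rw [hsgm] at hsd
        have hd : d < 0 := by linarith
        exact ⟨x, hxargs, hxa, hedge, hmax, fun _ => hctrb ▸ hd,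
          fun h => absurd h hnsupp⟩
      · rw [hsgp] at hsd
        have hd : 0 < d := by linarith
        exact ⟨x, hxargs, hxa, hedge, hmax, fun h => absurd h hnatt,
          fun _ => hctrb ▸ hd⟩
  obtain ⟨x, hxargs, hxa, hedge, hmax, hattc, hsuppc⟩ := main
  refine ⟨⟨x, hxargs, hxa, ?_⟩, x, hxargs, hxa, hedge, hmax, hattc, hsuppc⟩
  rcases hedge with h | h
  · exact ne_of_lt (hattc h)
  · exact ne_of_gt (hsuppc h)
end

section
/- Each of the contribution functions ctrb^r, ctrb^{ri}, ctrb^s, and ctrb^g satisfies the directionality principle with respect to each of the QE, DFQuAD, SD-DFQuAD, EB, and EBT semantics: for every acyclic QBAG G and arguments a, x ∈ A, if there is no directed path from x to a in the directed graph (A, Att ∪ Supp), then the contribution of x to a is 0. -/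
open Finset

section Aux

open Relation

lemma QBAG.mem_attackers_s12 {G : QBAG} {y b : ℕ} : y ∈ G.attackers b ↔ (y, b) ∈ G.att := by
  constructor
  · intro h
    rcases Finset.mem_image.1 h with ⟨p, hp, rfl⟩
    rcases Finset.mem_filter.1 hp with ⟨hp1, hp2⟩
    have h' : (p.1, p.2) ∈ G.att := by simpa using hp1
    rwa [hp2] at h'
  · intro h
    exact Finset.mem_image.2 ⟨(y, b), Finset.mem_filter.2 ⟨h, rfl⟩, rfl⟩

lemma QBAG.mem_supporters_s12 {G : QBAG} {y b : ℕ} : y ∈ G.supporters b ↔ (y, b) ∈ G.supp := by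
  constructor
  · intro h
    rcases Finset.mem_image.1 h with ⟨p, hp, rfl⟩
    rcases Finset.mem_filter.1 hp with ⟨hp1, hp2⟩
    have h' : (p.1, p.2) ∈ G.supp := by simpa using hp1
    rwa [hp2] at h'
  · intro h
    exact Finset.mem_image.2 ⟨(y, b), Finset.mem_filter.2 ⟨h, rfl⟩, rfl⟩

lemma reach_mem {G : QBAG} (hw : G.WF) {a b : ℕ} (ha : a ∈ G.args)
    (h : Relation.ReflTransGen G.edge b a) : b ∈ G.args := by
  rcases (Relation.ReflTransGen.cases_head h) with rfl | ⟨c, hc, _⟩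
  · exact ha
  · rcases hc with h' | h'
    · exact (hw.1 _ h').1
    · exact (hw.2.1 _ h').1

lemma restrict_edge_sub {G : QBAG} {S : Finset ℕ} {y z : ℕ}
    (h : (G.restrict S).edge y z) : G.edge y z := by
  rcases h with h | h
  · exact Or.inl (Finset.mem_filter.1 h).1
  · exact Or.inr (Finset.mem_filter.1 h).1

lemma dropInto_edge_sub {G : QBAG} {x y z : ℕ}
    (h : (G.dropInto x).edge y z) : G.edge y z := by
  rcases h with h | h
  · exact Or.inl (Finset.mem_filter.1 h).1
  · exact Or.inr (Finset.mem_filter.1 h).1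

lemma restrict_wf {G : QBAG} {S : Finset ℕ} (h : G.WF) : (G.restrict S).WF := by
  refine ⟨?_, ?_, ?_, ?_⟩
  · intro p hp
    rcases Finset.mem_filter.1 hp with ⟨hp1, hp2, hp3⟩
    exact ⟨Finset.mem_inter.2 ⟨(h.1 _ hp1).1, hp2⟩, Finset.mem_inter.2 ⟨(h.1 _ hp1).2, hp3⟩⟩
  · intro p hp
    rcases Finset.mem_filter.1 hp with ⟨hp1, hp2, hp3⟩
    exact ⟨Finset.mem_inter.2 ⟨(h.2.1 _ hp1).1, hp2⟩, Finset.mem_inter.2 ⟨(h.2.1 _ hp1).2, hp3⟩⟩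
  · exact Disjoint.mono (Finset.filter_subset _ _) (Finset.filter_subset _ _) h.2.2.1
  · intro a haa
    exact h.2.2.2 a (Finset.mem_inter.1 haa).1

lemma restrict_acyclic {G : QBAG} {S : Finset ℕ} (h : G.Acyclic) : (G.restrict S).Acyclic := by
  intro x hx
  exact h x (Relation.TransGen.lift id (fun _ _ h' => restrict_edge_sub h') _ _ hx)

lemma dropInto_wf {G : QBAG} {x : ℕ} (h : G.WF) : (G.dropInto x).WF := by
  refine ⟨?_, ?_, ?_, ?_⟩
  · intro p hp; exact h.1 _ (Finset.mem_filter.1 hp).1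
  · intro p hp; exact h.2.1 _ (Finset.mem_filter.1 hp).1
  · exact Disjoint.mono (Finset.filter_subset _ _) (Finset.filter_subset _ _) h.2.2.1
  · exact h.2.2.2

lemma dropInto_acyclic {G : QBAG} {x : ℕ} (h : G.Acyclic) : (G.dropInto x).Acyclic := by
  intro z hz
  exact h z (Relation.TransGen.lift id (fun _ _ h' => dropInto_edge_sub h') _ _ hz)

lemma setTau_wf {G : QBAG} {x : ℕ} {ε : ℝ} (h : G.WF) (hε : ε ∈ Set.Icc (0:ℝ) 1) :
    (G.setTau x ε).WF := by
  refine ⟨h.1, h.2.1, h.2.2.1, ?_⟩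
  intro a haa
  by_cases hax : a = x
  · subst hax; simpa [QBAG.setTau] using hε
  · simpa [QBAG.setTau, Function.update_of_ne hax] using h.2.2.2 a haa

/-- Master lemma: σ at `a` only depends on the part of the graph that can reach `a`. -/
lemma sigma_eq_of_agree
    (agg : QBAG → (ℕ → ℝ) → ℕ → ℝ) (iota : ℝ → ℝ → ℝ) (σ : QBAG → ℕ → ℝ)
    (hσ : IsSemantics agg iota σ)
    (hagg : ∀ (G G' : QBAG) (s s' : ℕ → ℝ) (b : ℕ),
      G.attackers b = G'.attackers b → G.supporters b = G'.supporters b →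
      (∀ y ∈ G.attackers b, s y = s' y) → (∀ y ∈ G.supporters b, s y = s' y) →
      agg G s b = agg G' s' b)
    (G₁ G₂ : QBAG) (hw₁ : G₁.WF) (hc₁ : G₁.Acyclic) (hw₂ : G₂.WF) (hc₂ : G₂.Acyclic)
    (a : ℕ) (ha : a ∈ G₁.args)
    (H : ∀ b, Relation.ReflTransGen G₁.edge b a →
      b ∈ G₂.args ∧ G₁.tau b = G₂.tau b ∧
      G₁.attackers b = G₂.attackers b ∧ G₁.supporters b = G₂.supporters b) :
    σ G₁ a = σ G₂ a := by
  classical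
  have key : ∀ n, ∀ b, (G₁.args.filter fun z => Relation.TransGen G₁.edge z b).card ≤ n →
      b ∈ G₁.args → Relation.ReflTransGen G₁.edge b a → σ G₁ b = σ G₂ b := by
    intro n
    induction n using Nat.strong_induction_on with
    | _ n ih =>
      intro b hcard hb hreach
      obtain ⟨hb₂, htau, hatt, hsupp⟩ := H b hreach
      have hstep : ∀ y, G₁.edge y b → σ G₁ y = σ G₂ y := by
        intro y hy
        have hy₁ : y ∈ G₁.args := by
          rcases hy with h | h
          · exact (hw₁.1 _ h).1
          · exact (hw₁.2.1 _ h).1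
        have hyr : Relation.ReflTransGen G₁.edge y a := Relation.ReflTransGen.head hy hreach
        have hlt : (G₁.args.filter fun z => Relation.TransGen G₁.edge z y).card <
            (G₁.args.filter fun z => Relation.TransGen G₁.edge z b).card := by
          apply Finset.card_lt_card
          rw [Finset.ssubset_def]
          constructor
          · intro z hz
            rcases Finset.mem_filter.1 hz with ⟨hz1, hz2⟩
            exact Finset.mem_filter.2 ⟨hz1, hz2.trans (Relation.TransGen.single hy)⟩
          · intro hsub
            have hyin : y ∈ G₁.args.filter fun z => Relation.TransGen G₁.edge z b :=
              Finset.mem_filter.2 ⟨hy₁, Relation.TransGen.single hy⟩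
            exact hc₁ y (Finset.mem_filter.1 (hsub hyin)).2
        exact ih _ (lt_of_lt_of_le hlt hcard) y le_rfl hy₁ hyr
      rw [hσ G₁ hw₁ hc₁ b hb, hσ G₂ hw₂ hc₂ b hb₂, htau]
      congr 1
      exact hagg G₁ G₂ _ _ b hatt hsupp
        (fun y hy => hstep y (Or.inl (QBAG.mem_attackers_s12.1 hy)))
        (fun y hy => hstep y (Or.inr (QBAG.mem_supporters_s12.1 hy)))
  exact key _ a le_rfl ha Relation.ReflTransGen.refl

/-- Directionality for all four contribution functions, for any modular semantics with
a local aggregation function. -/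
lemma directionality_master
    (agg : QBAG → (ℕ → ℝ) → ℕ → ℝ) (iota : ℝ → ℝ → ℝ) (σ : QBAG → ℕ → ℝ)
    (hσ : IsSemantics agg iota σ)
    (hagg : ∀ (G G' : QBAG) (s s' : ℕ → ℝ) (b : ℕ),
      G.attackers b = G'.attackers b → G.supporters b = G'.supporters b →
      (∀ y ∈ G.attackers b, s y = s' y) → (∀ y ∈ G.supporters b, s y = s' y) →
      agg G s b = agg G' s' b) :
    ∀ G : QBAG, G.WF → G.Acyclic → ∀ a ∈ G.args, ∀ x ∈ G.args,
      ¬ Relation.ReflTransGen G.edge x a →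
      ctrbR σ G a x = 0 ∧ ctrbRI σ G a x = 0 ∧ ctrbS σ G a x = 0 ∧ ctrbG σ G a x = 0 := by
  intro G hw hac a ha x hx hnot
  have hax : x ≠ a := by rintro rfl; exact hnot Relation.ReflTransGen.refl
  -- removal
  have hr : σ G a = σ (G.restrict (G.args.erase x)) a := by
    apply sigma_eq_of_agree agg iota σ hσ hagg G _ hw hac (restrict_wf hw)
      (restrict_acyclic hac) a ha
    intro b hb
    have hbx : b ≠ x := by rintro rfl; exact hnot hb
    have hbA : b ∈ G.args := reach_mem hw ha hb
    refine ⟨Finset.mem_inter.2 ⟨hbA, Finset.mem_erase.2 ⟨hbx, hbA⟩⟩, rfl, ?_, ?_⟩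
    · ext y
      rw [QBAG.mem_attackers_s12, QBAG.mem_attackers_s12]
      show (y, b) ∈ G.att ↔ (y, b) ∈ G.att.filter _
      rw [Finset.mem_filter]
      constructor
      · intro h
        have hyA : y ∈ G.args := (hw.1 _ h).1
        have hyx : y ≠ x := by
          rintro rfl
          exact hnot (Relation.ReflTransGen.head (Or.inl h) hb)
        exact ⟨h, Finset.mem_erase.2 ⟨hyx, hyA⟩, Finset.mem_erase.2 ⟨hbx, hbA⟩⟩
      · exact fun h => h.1
    · ext y
      rw [QBAG.mem_supporters_s12, QBAG.mem_supporters_s12]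
      show (y, b) ∈ G.supp ↔ (y, b) ∈ G.supp.filter _
      rw [Finset.mem_filter]
      constructor
      · intro h
        have hyA : y ∈ G.args := (hw.2.1 _ h).1
        have hyx : y ≠ x := by
          rintro rfl
          exact hnot (Relation.ReflTransGen.head (Or.inr h) hb)
        exact ⟨h, Finset.mem_erase.2 ⟨hyx, hyA⟩, Finset.mem_erase.2 ⟨hbx, hbA⟩⟩
      · exact fun h => h.1
  -- drop into
  have hri : σ G a = σ (G.dropInto x) a := by
    apply sigma_eq_of_agree agg iota σ hσ hagg G _ hw hac (dropInto_wf hw)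
      (dropInto_acyclic hac) a ha
    intro b hb
    have hbx : b ≠ x := by rintro rfl; exact hnot hb
    have hbA : b ∈ G.args := reach_mem hw ha hb
    refine ⟨hbA, rfl, ?_, ?_⟩
    · ext y
      rw [QBAG.mem_attackers_s12, QBAG.mem_attackers_s12]
      show (y, b) ∈ G.att ↔ (y, b) ∈ G.att.filter _
      rw [Finset.mem_filter]
      exact ⟨fun h => ⟨h, hbx⟩, fun h => h.1⟩
    · ext y
      rw [QBAG.mem_supporters_s12, QBAG.mem_supporters_s12]
      show (y, b) ∈ G.supp ↔ (y, b) ∈ G.supp.filter _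
      rw [Finset.mem_filter]
      exact ⟨fun h => ⟨h, hbx⟩, fun h => h.1⟩
  -- Shapley
  have hs : ctrbS σ G a x = 0 := by
    unfold ctrbS
    apply Finset.sum_eq_zero
    intro X hX
    have hXsub : X ⊆ (G.args.erase a).erase x := Finset.mem_powerset.1 hX
    have hxX : x ∉ X := fun h => (Finset.mem_erase.1 (hXsub h)).1 rfl
    have haX : a ∉ X := fun h =>
      (Finset.mem_erase.1 (Finset.mem_of_mem_erase (hXsub h))).1 rfl
    have heq : σ (G.restrict (G.args \ X)) a = σ (G.restrict (G.args \ insert x X)) a := by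
      apply sigma_eq_of_agree agg iota σ hσ hagg _ _ (restrict_wf hw) (restrict_acyclic hac)
        (restrict_wf hw) (restrict_acyclic hac) a
        (Finset.mem_inter.2 ⟨ha, Finset.mem_sdiff.2 ⟨ha, haX⟩⟩)
      intro b hb
      have hbG : Relation.ReflTransGen G.edge b a :=
        Relation.ReflTransGen.lift id (fun _ _ h => restrict_edge_sub h) _ _ hb
      have hbx : b ≠ x := by rintro rfl; exact hnot hbG
      have hbA : b ∈ G.args := reach_mem hw ha hbG
      have hbG1 : b ∈ (G.restrict (G.args \ X)).args :=
        reach_mem (restrict_wf hw) (Finset.mem_inter.2 ⟨ha, Finset.mem_sdiff.2 ⟨ha, haX⟩⟩) hb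
      have hbX : b ∉ X := (Finset.mem_sdiff.1 (Finset.mem_inter.1 hbG1).2).2
      refine ⟨?_, rfl, ?_, ?_⟩
      · refine Finset.mem_inter.2 ⟨hbA, Finset.mem_sdiff.2 ⟨hbA, ?_⟩⟩
        intro hmem
        rcases Finset.mem_insert.1 hmem with rfl | hmem
        · exact hbx rfl
        · exact hbX hmem
      · ext y
        rw [QBAG.mem_attackers_s12, QBAG.mem_attackers_s12]
        show (y, b) ∈ G.att.filter _ ↔ (y, b) ∈ G.att.filter _
        rw [Finset.mem_filter, Finset.mem_filter]
        constructor
        · rintro ⟨h, hy, hb'⟩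
          have hyG : Relation.ReflTransGen G.edge y a :=
            Relation.ReflTransGen.head (Or.inl h)  hbG
          have hyx : y ≠ x := by rintro rfl; exact hnot hyG
          rcases Finset.mem_sdiff.1 hy with ⟨hy1, hy2⟩
          rcases Finset.mem_sdiff.1 hb' with ⟨hb1, hb2⟩
          refine ⟨h, Finset.mem_sdiff.2 ⟨hy1, ?_⟩, Finset.mem_sdiff.2 ⟨hb1, ?_⟩⟩
          · intro hmem
            rcases Finset.mem_insert.1 hmem with rfl | hmem
            · exact hyx rfl
            · exact hy2 hmem
          · intro hmem
            rcases Finset.mem_insert.1 hmem with rfl | hmem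
            · exact hbx rfl
            · exact hb2 hmem
        · rintro ⟨h, hy, hb'⟩
          rcases Finset.mem_sdiff.1 hy with ⟨hy1, hy2⟩
          rcases Finset.mem_sdiff.1 hb' with ⟨hb1, hb2⟩
          exact ⟨h, Finset.mem_sdiff.2 ⟨hy1, fun hm => hy2 (Finset.mem_insert_of_mem hm)⟩,
            Finset.mem_sdiff.2 ⟨hb1, fun hm => hb2 (Finset.mem_insert_of_mem hm)⟩⟩
      · ext y
        rw [QBAG.mem_supporters_s12, QBAG.mem_supporters_s12]
        show (y, b) ∈ G.supp.filter _ ↔ (y, b) ∈ G.supp.filter _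
        rw [Finset.mem_filter, Finset.mem_filter]
        constructor
        · rintro ⟨h, hy, hb'⟩
          have hyG : Relation.ReflTransGen G.edge y a :=
            Relation.ReflTransGen.head (Or.inr h) hbG
          have hyx : y ≠ x := by rintro rfl; exact hnot hyG
          rcases Finset.mem_sdiff.1 hy with ⟨hy1, hy2⟩
          rcases Finset.mem_sdiff.1 hb' with ⟨hb1, hb2⟩
          refine ⟨h, Finset.mem_sdiff.2 ⟨hy1, ?_⟩, Finset.mem_sdiff.2 ⟨hb1, ?_⟩⟩
          · intro hmem
            rcases Finset.mem_insert.1 hmem with rfl | hmem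
            · exact hyx rfl
            · exact hy2 hmem
          · intro hmem
            rcases Finset.mem_insert.1 hmem with rfl | hmem
            · exact hbx rfl
            · exact hb2 hmem
        · rintro ⟨h, hy, hb'⟩
          rcases Finset.mem_sdiff.1 hy with ⟨hy1, hy2⟩
          rcases Finset.mem_sdiff.1 hb' with ⟨hb1, hb2⟩
          exact ⟨h, Finset.mem_sdiff.2 ⟨hy1, fun hm => hy2 (Finset.mem_insert_of_mem hm)⟩,
            Finset.mem_sdiff.2 ⟨hb1, fun hm => hb2 (Finset.mem_insert_of_mem hm)⟩⟩
    rw [heq, sub_self, mul_zero]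
  -- gradient
  have hconst : ∀ ε ∈ Set.Icc (0:ℝ) 1, σ (G.setTau x ε) a = σ G a := by
    intro ε hε
    apply sigma_eq_of_agree agg iota σ hσ hagg (G.setTau x ε) G (setTau_wf hw hε) hac hw hac a ha
    intro b hb
    have hbG : Relation.ReflTransGen G.edge b a := hb
    have hbx : b ≠ x := by rintro rfl; exact hnot hbG
    exact ⟨reach_mem hw ha hbG, Function.update_of_ne hbx _ _, rfl, rfl⟩
  have hg : ctrbG σ G a x = 0 := by
    have hτx : G.tau x ∈ Set.Icc (0:ℝ) 1 := hw.2.2.2 x hx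
    unfold ctrbG
    rw [derivWithin_congr (fun ε hε => hconst ε hε) (hconst _ hτx)]
    exact congrFun (derivWithin_fun_const _ _) _
  refine ⟨by rw [ctrbR, hr, sub_self], by rw [ctrbRI, ← hri, hr, sub_self], hs, hg⟩

lemma hagg_sum : ∀ (G G' : QBAG) (s s' : ℕ → ℝ) (b : ℕ),
    G.attackers b = G'.attackers b → G.supporters b = G'.supporters b →
    (∀ y ∈ G.attackers b, s y = s' y) → (∀ y ∈ G.supporters b, s y = s' y) →
    sumAgg G s b = sumAgg G' s' b := by
  intro G G' s s' b hA hS h1 h2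
  unfold sumAgg
  rw [← hA, ← hS, Finset.sum_congr rfl h1, Finset.sum_congr rfl h2]

lemma hagg_prod : ∀ (G G' : QBAG) (s s' : ℕ → ℝ) (b : ℕ),
    G.attackers b = G'.attackers b → G.supporters b = G'.supporters b →
    (∀ y ∈ G.attackers b, s y = s' y) → (∀ y ∈ G.supporters b, s y = s' y) →
    prodAgg G s b = prodAgg G' s' b := by
  intro G G' s s' b hA hS h1 h2
  unfold prodAgg
  have e1 : ∏ y ∈ G.attackers b, (1 - s y) = ∏ y ∈ G.attackers b, (1 - s' y) :=
    Finset.prod_congr rfl (fun y hy => by rw [h1 y hy])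
  have e2 : ∏ y ∈ G.supporters b, (1 - s y) = ∏ y ∈ G.supporters b, (1 - s' y) :=
    Finset.prod_congr rfl (fun y hy => by rw [h2 y hy])
  rw [← hA, ← hS, e1, e2]

lemma hagg_top : ∀ (G G' : QBAG) (s s' : ℕ → ℝ) (b : ℕ),
    G.attackers b = G'.attackers b → G.supporters b = G'.supporters b →
    (∀ y ∈ G.attackers b, s y = s' y) → (∀ y ∈ G.supporters b, s y = s' y) →
    topAgg G s b = topAgg G' s' b := by
  intro G G' s s' b hA hS h1 h2
  unfold topAgg
  rw [← hA, ← hS, Finset.fold_congr h1, Finset.fold_congr h2]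

end Aux

/-- Each of ctrb^r, ctrb^{ri}, ctrb^s, and ctrb^g satisfies the
directionality principle w.r.t. each of the QE, DFQuAD, SD-DFQuAD, EB, and EBT
semantics: if there is no directed path from x to a in (A, Att ∪ Supp), then the
contribution of x to a is 0. -/
theorem all_contribution_functions_satisfy_directionality
    (σ : QBAG → ℕ → ℝ) (hσ : IsQE σ ∨ IsDF σ ∨ IsSD σ ∨ IsEB σ ∨ IsEBT σ) :
    ∀ G : QBAG, G.WF → G.Acyclic → ∀ a ∈ G.args, ∀ x ∈ G.args,
      ¬ Relation.ReflTransGen G.edge x a →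
      ctrbR σ G a x = 0 ∧ ctrbRI σ G a x = 0 ∧ ctrbS σ G a x = 0 ∧ ctrbG σ G a x = 0 := by
  rcases hσ with h | h | h | h | h
  · exact directionality_master sumAgg iotaQE σ h hagg_sum
  · exact directionality_master prodAgg iotaLin σ h hagg_prod
  · exact directionality_master prodAgg iotaSD σ h hagg_prod
  · exact directionality_master sumAgg iotaEB σ h hagg_sum
  · exact directionality_master topAgg iotaEB σ h hagg_top
end
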